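/- arXiv:1802.06021 — 2 statements merged into one kernel-verified Lean document; each statement's English description precedes it below -/
import Mathlib

section
/- The 5-cube Q_5 contains three pairwise edge-disjoint symmetric chain decompositions. -/
/-- The Hamming weight of a bitstring of length `n`, i.e., its number of 1-bits. -/
def wt {n : ℕ} (x : Fin n → Bool) : ℕ := (Finset.univ.filter fun i => x i = true).card

/-- The `n`-dimensional hypercube: vertices are bitstrings of length `n`, two of which are
adjacent iff they differ in exactly one position. -/
def cube (n : ℕ) : SimpleGraph (Fin n → Bool) where
  Adj x y := hammingDist x y = 1
  symm := ⟨by intro x y h; rwa [hammingDist_comm]⟩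
  loopless := ⟨by intro x h; simp [hammingDist_self] at h⟩
/-- A symmetric chain in the `n`-cube: a path `(x_k, x_{k+1}, …, x_{n−k})` in `cube n`
where `x_i` has Hamming weight `i` for each `k ≤ i ≤ n − k`. -/
def IsSymChain (n : ℕ) (c : List (Fin n → Bool)) : Prop :=
  c ≠ [] ∧ c.Chain' (cube n).Adj ∧
  ∃ k : ℕ, (∀ (i : ℕ) (h : i < c.length), wt (c.get ⟨i, h⟩) = k + i) ∧
    2 * k + (c.length - 1) = n

/-- A symmetric chain decomposition of the `n`-cube: a collection of symmetric chains
whose vertex sets partition the vertex set. -/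
def IsSCD (n : ℕ) (D : Set (List (Fin n → Bool))) : Prop :=
  (∀ c ∈ D, IsSymChain n c) ∧ ∀ x : Fin n → Bool, ∃! c, c ∈ D ∧ x ∈ c

/-- The edges lying on a chain, i.e., the unordered pairs of consecutive entries. -/
def chainEdges {V : Type*} (c : List V) : Set (Sym2 V) :=
  {e | ∃ (i : ℕ) (h : i + 1 < c.length),
    e = s(c.get ⟨i, Nat.lt_of_succ_lt h⟩, c.get ⟨i + 1, h⟩)}

/-- All edges lying on some chain of the collection `D`. -/
def scdEdges {n : ℕ} (D : Set (List (Fin n → Bool))) : Set (Sym2 (Fin n → Bool)) :=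
  ⋃ c ∈ D, chainEdges c

/-- Two chain decompositions are edge-disjoint if no edge lies on a chain of one
and also on a chain of the other. -/
def EdgeDisjointSCD {n : ℕ} (D D' : Set (List (Fin n → Bool))) : Prop :=
  Disjoint (scdEdges D) (scdEdges D')

instance : DecidableRel (cube 5).Adj := fun x y =>
  decidable_of_iff (hammingDist x y = 1) Iff.rfl

/-- A decidable criterion for being a symmetric chain in `Q_5`. -/
def chainOK (l : List (Fin 5 → Bool)) : Prop :=
  l ≠ [] ∧ (∀ i ∈ List.range (l.length - 1),
    hammingDist (l.getD i default) (l.getD (i+1) default) = 1) ∧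
  (∀ i ∈ List.range l.length, wt (l.getD i default) = wt l.headI + i) ∧
  2 * wt l.headI + (l.length - 1) = 5

instance (l : List (Fin 5 → Bool)) : Decidable (chainOK l) :=
  inferInstanceAs (Decidable (_ ∧ _ ∧ _ ∧ _))

lemma isSymChain_of {l : List (Fin 5 → Bool)} (h : chainOK l) : IsSymChain 5 l := by
  have hchain : l.Chain' (cube 5).Adj := by
    show List.IsChain _ l
    rw [List.isChain_iff_getElem]
    intro i hi
    have hm := h.2.1 i (List.mem_range.mpr (by omega))
    rw [List.getD_eq_getElem l default (show i < l.length by omega)] at hm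
    rw [List.getD_eq_getElem l default (show i + 1 < l.length by omega)] at hm
    exact hm
  refine ⟨h.1, hchain, wt l.headI, fun i hi => ?_, h.2.2.2⟩
  have := h.2.2.1 i (List.mem_range.mpr hi)
  rwa [List.getD_eq_getElem _ _ hi] at this

/-- The list of edges of a chain. -/
def edgeList {V : Type*} (c : List V) : List (Sym2 V) :=
  (c.zip c.tail).map fun p => s(p.1, p.2)

lemma mem_chainEdges_iff {V : Type*} (l : List V) (e : Sym2 V) :
    e ∈ chainEdges l ↔ e ∈ edgeList l := by
  constructor
  · rintro ⟨i, h, rfl⟩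
    have hi : i < (l.zip l.tail).length := by
      simp only [List.length_zip, List.length_tail]; omega
    have hz : (l.zip l.tail)[i] = (l[i], l[i+1]) := by
      rw [List.getElem_zip, List.getElem_tail]
    refine List.mem_map.mpr ⟨(l[i], l[i+1]), ?_, rfl⟩
    rw [← hz]
    exact List.getElem_mem hi
  · intro he
    obtain ⟨⟨a, b⟩, hab, rfl⟩ := List.mem_map.mp he
    obtain ⟨i, hi, hget⟩ := List.mem_iff_getElem.mp hab
    simp only [List.length_zip, List.length_tail] at hi
    have h : i + 1 < l.length := by omega
    refine ⟨i, h, ?_⟩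
    rw [List.getElem_zip, List.getElem_tail] at hget
    have h1 : a = l[i] := congrArg Prod.fst hget.symm
    have h2 : b = l[i+1] := congrArg Prod.snd hget.symm
    simp only [List.get_eq_getElem, h1, h2]

lemma isSCD_of_list (L : List (List (Fin 5 → Bool)))
    (h1 : ∀ c ∈ L, chainOK c)
    (h2 : ∀ x : Fin 5 → Bool, ∃ c ∈ L, x ∈ c ∧ ∀ c' ∈ L, x ∈ c' → c' = c) :
    IsSCD 5 {c | c ∈ L} := by
  refine ⟨fun c hc => isSymChain_of (h1 c hc), fun x => ?_⟩
  obtain ⟨c, hc, hx, hu⟩ := h2 x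
  exact ⟨c, ⟨hc, hx⟩, fun c' hc' => hu c' hc'.1 hc'.2⟩

def edgesDisjointB (L L' : List (List (Fin 5 → Bool))) : Bool :=
  L.all fun c => (c.zip c.tail).all fun p => L'.all fun c' => (c'.zip c'.tail).all fun q =>
    !((decide (p.1 = q.1) && decide (p.2 = q.2)) || (decide (p.1 = q.2) && decide (p.2 = q.1)))

lemma edgeDisjoint_of_bool (L L' : List (List (Fin 5 → Bool)))
    (h : edgesDisjointB L L' = true) :
    EdgeDisjointSCD {c | c ∈ L} {c | c ∈ L'} := by
  rw [EdgeDisjointSCD, Set.disjoint_left]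
  intro e he he'
  simp only [scdEdges, Set.mem_iUnion, Set.mem_setOf_eq] at he he'
  obtain ⟨c, hc, hec⟩ := he
  obtain ⟨c', hc', hec'⟩ := he'
  rw [mem_chainEdges_iff] at hec hec'
  obtain ⟨p, hp, hep⟩ := List.mem_map.mp hec
  obtain ⟨q, hq, heq⟩ := List.mem_map.mp hec'
  simp only [edgesDisjointB, List.all_eq_true] at h
  have h2 := h c hc p hp c' hc' q hq
  rw [← heq, Sym2.eq_iff] at hep
  rcases hep with ⟨e1, e2⟩ | ⟨e1, e2⟩ <;> simp [e1, e2] at h2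

def L0 : List (List (Fin 5 → Bool)) := [
  [![false,false,false,false,false], ![true,false,false,false,false], ![true,true,false,false,false], ![true,true,true,false,false], ![true,true,true,false,true], ![true,true,true,true,true]],
  [![false,true,false,false,false], ![false,true,true,false,false], ![false,true,true,false,true], ![false,true,true,true,true]],
  [![false,false,true,false,false], ![false,false,true,false,true], ![true,false,true,false,true], ![true,false,true,true,true]],
  [![false,false,false,true,false], ![false,false,true,true,false], ![false,true,true,true,false], ![true,true,true,true,false]],
  [![false,false,false,false,true], ![false,true,false,false,true], ![true,true,false,false,true], ![true,true,false,true,true]],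
  [![false,false,false,true,true], ![false,false,true,true,true]],
  [![false,true,false,true,false], ![false,true,false,true,true]],
  [![true,false,false,false,true], ![true,false,false,true,true]],
  [![true,false,false,true,false], ![true,true,false,true,false]],
  [![true,false,true,false,false], ![true,false,true,true,false]]
]

def L1 : List (List (Fin 5 → Bool)) := [
  [![false,false,false,false,false], ![false,true,false,false,false], ![false,true,false,false,true], ![false,true,false,true,true], ![true,true,false,true,true], ![true,true,true,true,true]],
  [![true,false,false,false,false], ![true,false,false,false,true], ![true,false,true,false,true], ![true,true,true,false,true]],
  [![false,false,false,false,true], ![false,false,false,true,true], ![true,false,false,true,true], ![true,false,true,true,true]],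
  [![false,false,true,false,false], ![false,true,true,false,false], ![false,true,true,true,false], ![false,true,true,true,true]],
  [![false,false,false,true,false], ![true,false,false,true,false], ![true,false,true,true,false], ![true,true,true,true,false]],
  [![false,false,true,false,true], ![false,true,true,false,true]],
  [![false,false,true,true,false], ![false,false,true,true,true]],
  [![false,true,false,true,false], ![true,true,false,true,false]],
  [![true,false,true,false,false], ![true,true,true,false,false]],
  [![true,true,false,false,false], ![true,true,false,false,true]]
]

def L2 : List (List (Fin 5 → Bool)) := [
  [![false,false,false,false,false], ![false,false,true,false,false], ![false,false,true,true,false], ![true,false,true,true,false], ![true,false,true,true,true], ![true,true,true,true,true]],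
  [![false,false,false,false,true], ![true,false,false,false,true], ![true,true,false,false,true], ![true,true,true,false,true]],
  [![false,false,false,true,false], ![false,false,false,true,true], ![false,true,false,true,true], ![false,true,true,true,true]],
  [![true,false,false,false,false], ![true,false,false,true,false], ![true,false,false,true,true], ![true,true,false,true,true]],
  [![false,true,false,false,false], ![true,true,false,false,false], ![true,true,false,true,false], ![true,true,true,true,false]],
  [![false,false,true,false,true], ![false,false,true,true,true]],
  [![false,true,false,false,true], ![false,true,true,false,true]],
  [![false,true,false,true,false], ![false,true,true,true,false]],
  [![false,true,true,false,false], ![true,true,true,false,false]],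
  [![true,false,true,false,false], ![true,false,true,false,true]]
]


set_option maxRecDepth 8000
set_option maxHeartbeats 4000000

lemma chains0 : ∀ c ∈ L0, chainOK c := by decide
lemma chains1 : ∀ c ∈ L1, chainOK c := by decide
lemma chains2 : ∀ c ∈ L2, chainOK c := by decide

lemma cover0 : ∀ x : Fin 5 → Bool, ∃ c ∈ L0, x ∈ c ∧ ∀ c' ∈ L0, x ∈ c' → c' = c := by decide
lemma cover1 : ∀ x : Fin 5 → Bool, ∃ c ∈ L1, x ∈ c ∧ ∀ c' ∈ L1, x ∈ c' → c' = c := by decide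
lemma cover2 : ∀ x : Fin 5 → Bool, ∃ c ∈ L2, x ∈ c ∧ ∀ c' ∈ L2, x ∈ c' → c' = c := by decide

lemma dis01 : edgesDisjointB L0 L1 = true := by decide
lemma dis02 : edgesDisjointB L0 L2 = true := by decide
lemma dis12 : edgesDisjointB L1 L2 = true := by decide

/-- The 5-cube contains three pairwise edge-disjoint symmetric chain decompositions. -/
theorem three_edge_disjoint_SCDs_Q5 :
    ∃ D : Fin 3 → Set (List (Fin 5 → Bool)),
      (∀ i, IsSCD 5 (D i)) ∧ ∀ i j, i ≠ j → EdgeDisjointSCD (D i) (D j) := by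
  refine ⟨![{c | c ∈ L0}, {c | c ∈ L1}, {c | c ∈ L2}], ?_, ?_⟩
  · intro i
    fin_cases i
    · exact isSCD_of_list L0 chains0 cover0
    · exact isSCD_of_list L1 chains1 cover1
    · exact isSCD_of_list L2 chains2 cover2
  · have d01 := edgeDisjoint_of_bool L0 L1 dis01
    have d02 := edgeDisjoint_of_bool L0 L2 dis02
    have d12 := edgeDisjoint_of_bool L1 L2 dis12
    intro i j hij
    fin_cases i <;> fin_cases j <;> simp_all <;>
      first
        | exact d01 | exact d02 | exact d12
        | exact Disjoint.symm d01 | exact Disjoint.symm d02 | exact Disjoint.symm d12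
end

section
/- The 7-cube Q_7 contains four pairwise edge-disjoint symmetric chain decompositions. -/
set_option maxRecDepth 1000000

/-! ### Auxiliary definitions and data -/

def v (m : ℕ) : Fin 7 → Bool := fun i => m.testBit i.val

def toNatF (x : Fin 7 → Bool) : ℕ := ∑ i : Fin 7, if x i then 2 ^ (i : ℕ) else 0

def ChainOK (c : List ℕ) : Prop :=
  c ≠ [] ∧
  (∀ (i : ℕ) (h : i < c.length - 1),
    hammingDist (v (c.get ⟨i, by omega⟩)) (v (c.get ⟨i + 1, by omega⟩)) = 1) ∧
  (∀ i : Fin c.length, wt (v (c.get i)) = wt (v c.headI) + i.1) ∧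
  2 * wt (v c.headI) + (c.length - 1) = 7

instance (c : List ℕ) : Decidable (ChainOK c) :=
  inferInstanceAs (Decidable (_ ∧ _ ∧ _ ∧ _))

def pairsOf (S : List (List ℕ)) : List (ℕ × ℕ) := (S.map fun L => L.zip L.tail).flatten

def ecode (p : ℕ × ℕ) : ℕ := if p.1 ≤ p.2 then p.1 * 128 + p.2 else p.2 * 128 + p.1

def DDof (S : List (List ℕ)) : Set (List (Fin 7 → Bool)) := {c | ∃ L ∈ S, c = L.map v}

def S0 : List (List ℕ) :=
  [[0, 16, 20, 52, 116, 118, 119, 127],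
   [2, 66, 98, 114, 122, 126],
   [4, 12, 13, 15, 79, 95],
   [8, 9, 41, 105, 107, 123],
   [64, 68, 69, 77, 93, 125],
   [1, 5, 7, 39, 47, 63],
   [32, 96, 100, 101, 109, 111],
   [17, 25, 27, 31],
   [80, 81, 113, 117],
   [33, 97, 99, 103],
   [48, 112, 120, 121],
   [34, 50, 51, 115],
   [3, 11, 75, 91],
   [36, 44, 46, 110],
   [72, 76, 92, 124],
   [24, 88, 90, 94],
   [10, 26, 58, 59],
   [18, 19, 23, 55],
   [40, 56, 57, 61],
   [6, 22, 54, 62],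
   [65, 67, 83, 87],
   [14, 30],
   [21, 29],
   [28, 60],
   [35, 43],
   [37, 45],
   [38, 102],
   [42, 106],
   [49, 53],
   [70, 71],
   [73, 89],
   [74, 78],
   [82, 86],
   [84, 85],
   [104, 108]]

def S1 : List (List ℕ) :=
  [[0, 1, 17, 49, 57, 121, 123, 127],
   [16, 24, 28, 29, 31, 63],
   [64, 80, 84, 92, 93, 95],
   [8, 12, 44, 45, 47, 111],
   [4, 6, 7, 23, 87, 119],
   [2, 18, 50, 114, 118, 126],
   [32, 48, 56, 60, 61, 125],
   [34, 98, 102, 103],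
   [33, 41, 43, 59],
   [9, 73, 75, 107],
   [20, 21, 53, 55],
   [3, 19, 27, 91],
   [36, 38, 46, 62],
   [72, 88, 120, 124],
   [68, 76, 108, 110],
   [66, 67, 99, 115],
   [96, 97, 101, 117],
   [10, 14, 78, 94],
   [5, 13, 77, 109],
   [65, 69, 71, 79],
   [40, 42, 58, 122],
   [11, 15],
   [22, 30],
   [25, 89],
   [26, 90],
   [35, 51],
   [37, 39],
   [52, 54],
   [70, 86],
   [74, 106],
   [81, 85],
   [82, 83],
   [100, 116],
   [104, 105],
   [112, 113]]

def S2 : List (List ℕ) :=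
  [[6, 14, 46, 47],
   [12, 76, 78, 110],
   [8, 24, 56, 120, 122, 123],
   [1, 9, 25, 57, 59, 63],
   [11, 27],
   [13, 29],
   [5, 69, 85, 93],
   [19, 51],
   [21, 23],
   [48, 50, 58, 62],
   [40, 41, 45, 61],
   [44, 60],
   [66, 70, 102, 118],
   [17, 81, 83, 91],
   [82, 90],
   [16, 80, 88, 89, 121, 125],
   [65, 97, 105, 109],
   [18, 26, 30, 31],
   [7, 15],
   [49, 113],
   [64, 96, 112, 114, 115, 119],
   [98, 99],
   [34, 38, 54, 55],
   [72, 104, 106, 107],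
   [42, 43],
   [73, 77],
   [36, 52, 53, 117],
   [10, 74, 75, 79],
   [32, 33, 37, 101, 103, 111],
   [35, 39],
   [0, 2, 3, 67, 71, 87, 95, 127],
   [4, 20, 28, 92, 94, 126],
   [22, 86],
   [100, 108],
   [68, 84, 116, 124]]

def S3 : List (List ℕ) :=
  [[41, 57],
   [42, 46],
   [50, 54],
   [56, 58],
   [67, 75],
   [69, 101],
   [76, 77],
   [80, 112, 116, 117],
   [82, 114],
   [88, 92],
   [97, 113],
   [104, 120],
   [20, 84, 86, 118],
   [12, 28, 30, 94],
   [14, 15],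
   [9, 13, 45, 109],
   [10, 11, 43, 47],
   [16, 18, 22, 23, 31, 95],
   [48, 52, 60, 62],
   [17, 19, 83, 115],
   [5, 21, 85, 87],
   [24, 26, 27, 59],
   [25, 29],
   [65, 81, 89, 93],
   [72, 73, 105, 121],
   [64, 66, 74, 90, 91, 123],
   [96, 98, 106, 122],
   [3, 7, 71, 103],
   [1, 33, 49, 51, 55, 119],
   [38, 39],
   [2, 6, 70, 78, 79, 111],
   [34, 35, 99, 107],
   [4, 68, 100, 102, 110, 126],
   [8, 40, 44, 108, 124, 125],
   [0, 32, 36, 37, 53, 61, 63, 127]]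

/-! ### Decidable facts -/

lemma chainsOK0 : ∀ L ∈ S0, ChainOK L := by decide
lemma nodup0 : S0.flatten.Nodup := by decide
lemma bound0 : ∀ m ∈ S0.flatten, m < 128 := by decide
lemma cover0_s7 : ∀ m : Fin 128, (m : ℕ) ∈ S0.flatten := by decide
lemma chainsOK1 : ∀ L ∈ S1, ChainOK L := by decide
lemma nodup1 : S1.flatten.Nodup := by decide
lemma bound1 : ∀ m ∈ S1.flatten, m < 128 := by decide
lemma cover1_s7 : ∀ m : Fin 128, (m : ℕ) ∈ S1.flatten := by decide
lemma chainsOK2 : ∀ L ∈ S2, ChainOK L := by decide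
lemma nodup2 : S2.flatten.Nodup := by decide
lemma bound2 : ∀ m ∈ S2.flatten, m < 128 := by decide
lemma cover2_s7 : ∀ m : Fin 128, (m : ℕ) ∈ S2.flatten := by decide
lemma chainsOK3 : ∀ L ∈ S3, ChainOK L := by decide
lemma nodup3 : S3.flatten.Nodup := by decide
lemma bound3 : ∀ m ∈ S3.flatten, m < 128 := by decide
lemma cover3 : ∀ m : Fin 128, (m : ℕ) ∈ S3.flatten := by decide
lemma ed01 : ∀ p ∈ pairsOf S0, ∀ q ∈ pairsOf S1, ecode p ≠ ecode q := by decide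
lemma ed02 : ∀ p ∈ pairsOf S0, ∀ q ∈ pairsOf S2, ecode p ≠ ecode q := by decide
lemma ed03 : ∀ p ∈ pairsOf S0, ∀ q ∈ pairsOf S3, ecode p ≠ ecode q := by decide
lemma ed12 : ∀ p ∈ pairsOf S1, ∀ q ∈ pairsOf S2, ecode p ≠ ecode q := by decide
lemma ed13 : ∀ p ∈ pairsOf S1, ∀ q ∈ pairsOf S3, ecode p ≠ ecode q := by decide
lemma ed23 : ∀ p ∈ pairsOf S2, ∀ q ∈ pairsOf S3, ecode p ≠ ecode q := by decide

lemma v_toNatF : ∀ x : Fin 7 → Bool, v (toNatF x) = x := by decide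
lemma toNatF_lt : ∀ x : Fin 7 → Bool, toNatF x < 128 := by decide

/-! ### Glue lemmas -/

lemma v_inj {a b : ℕ} (ha : a < 128) (hb : b < 128) (h : v a = v b) : a = b := by
  apply Nat.eq_of_testBit_eq
  intro i
  by_cases hi : i < 7
  · exact congrFun h ⟨i, hi⟩
  · have h7 : (128 : ℕ) ≤ 2 ^ i := by
      calc (128 : ℕ) = 2 ^ 7 := by norm_num
      _ ≤ 2 ^ i := Nat.pow_le_pow_right (by norm_num) (le_of_not_gt hi)
    rw [Nat.testBit_lt_two_pow (lt_of_lt_of_le ha h7),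
      Nat.testBit_lt_two_pow (lt_of_lt_of_le hb h7)]

lemma isSymChain_of_chainOK {c : List ℕ} (h : ChainOK c) : IsSymChain 7 (c.map v) := by
  obtain ⟨hne, hch, hwt, hk⟩ := h
  refine ⟨by simpa using hne, ?_, wt (v c.headI), ?_, by simpa using hk⟩
  · exact (List.isChain_map v).2 (List.isChain_iff_getElem.2 fun i hi => hch i (by omega))
  · intro i hi
    have hi' : i < c.length := by simpa using hi
    have := hwt ⟨i, hi'⟩
    simpa [List.get_eq_getElem, List.getElem_map] using this

lemma isSCD_of (S : List (List ℕ)) (hch : ∀ L ∈ S, ChainOK L)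
    (hnd : S.flatten.Nodup) (hb : ∀ m ∈ S.flatten, m < 128)
    (hc : ∀ m : Fin 128, (m : ℕ) ∈ S.flatten) : IsSCD 7 (DDof S) := by
  constructor
  · rintro c ⟨L, hL, rfl⟩
    exact isSymChain_of_chainOK (hch L hL)
  · intro x
    have hm : toNatF x < 128 := toNatF_lt x
    have hx : v (toNatF x) = x := v_toNatF x
    have hmem : toNatF x ∈ S.flatten := by simpa using hc ⟨toNatF x, hm⟩
    obtain ⟨L, hL, hmL⟩ := List.mem_flatten.1 hmem
    refine ⟨L.map v, ⟨⟨L, hL, rfl⟩, List.mem_map.2 ⟨toNatF x, hmL, hx⟩⟩, ?_⟩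
    rintro c' ⟨⟨L', hL', rfl⟩, hx'⟩
    obtain ⟨m', hm'L, hv'⟩ := List.mem_map.1 hx'
    have hm' : m' < 128 := hb m' (List.mem_flatten.2 ⟨L', hL', hm'L⟩)
    have hmm : m' = toNatF x := v_inj hm' hm (hv'.trans hx.symm)
    subst hmm
    have hdisj := (List.nodup_flatten.1 hnd).2
    have hLL : L' = L := by
      by_contra hne
      haveI : Std.Symm (@List.Disjoint ℕ) := ⟨fun _ _ h => h.symm⟩
      exact (hdisj.forall hL' hL hne) hm'L hmL
    subst hLL; rfl

lemma ecode_swap (a b : ℕ) : ecode (a, b) = ecode (b, a) := by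
  unfold ecode; dsimp only
  rcases le_total a b with h | h
  · rcases eq_or_lt_of_le h with rfl | h'
    · simp
    · rw [if_pos h, if_neg (not_le.2 h')]
  · rcases eq_or_lt_of_le h with rfl | h'
    · simp
    · rw [if_neg (not_le.2 h'), if_pos h]

lemma chainEdges_extract {L : List ℕ} {e : Sym2 (Fin 7 → Bool)}
    (he : e ∈ chainEdges (L.map v)) :
    ∃ p ∈ L.zip L.tail, p.1 ∈ L ∧ p.2 ∈ L ∧ e = s(v p.1, v p.2) := by
  obtain ⟨t, ht, hee⟩ := he
  have hL : t + 1 < L.length := by simpa using ht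
  have h1 : t < L.length := Nat.lt_of_succ_lt hL
  have hz : t < (L.zip L.tail).length := by
    simp only [List.length_zip, List.length_tail]
    omega
  refine ⟨(L[t]'h1, L[t+1]'hL), ?_, List.getElem_mem h1, List.getElem_mem hL, ?_⟩
  · have hzz : (L.zip L.tail)[t]'hz = (L[t]'h1, L[t+1]'hL) := by
      rw [List.getElem_zip, List.getElem_tail]
    rw [← hzz]
    exact List.getElem_mem hz
  · rw [hee]
    simp [List.get_eq_getElem, List.getElem_map]

lemma mem_pairsOf {S : List (List ℕ)} {L : List ℕ} {p : ℕ × ℕ}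
    (hL : L ∈ S) (hp : p ∈ L.zip L.tail) : p ∈ pairsOf S :=
  List.mem_flatten.2 ⟨L.zip L.tail, List.mem_map_of_mem hL, hp⟩

lemma edisj_of_key {A B : List (List ℕ)}
    (hbA : ∀ m ∈ A.flatten, m < 128) (hbB : ∀ m ∈ B.flatten, m < 128)
    (key : ∀ p ∈ pairsOf A, ∀ q ∈ pairsOf B, ecode p ≠ ecode q) :
    EdgeDisjointSCD (DDof A) (DDof B) := by
  rw [EdgeDisjointSCD, Set.disjoint_left]
  rintro e hei hej
  obtain ⟨c, hc, hce⟩ := Set.mem_iUnion₂.1 hei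
  obtain ⟨L, hL, rfl⟩ := hc
  obtain ⟨c', hc', hce'⟩ := Set.mem_iUnion₂.1 hej
  obtain ⟨L', hL', rfl⟩ := hc'
  obtain ⟨p, hp, hp1, hp2, hpe⟩ := chainEdges_extract hce
  obtain ⟨q, hq, hq1, hq2, hqe⟩ := chainEdges_extract hce'
  have ha : p.1 < 128 := hbA _ (List.mem_flatten.2 ⟨L, hL, hp1⟩)
  have hb : p.2 < 128 := hbA _ (List.mem_flatten.2 ⟨L, hL, hp2⟩)
  have ha' : q.1 < 128 := hbB _ (List.mem_flatten.2 ⟨L', hL', hq1⟩)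
  have hb' : q.2 < 128 := hbB _ (List.mem_flatten.2 ⟨L', hL', hq2⟩)
  have hsym : s(v p.1, v p.2) = s(v q.1, v q.2) := hpe.symm.trans hqe
  have : ecode p = ecode q := by
    rcases Sym2.eq_iff.1 hsym with ⟨h1, h2⟩ | ⟨h1, h2⟩
    · have e1 : p.1 = q.1 := v_inj ha ha' h1
      have e2 : p.2 = q.2 := v_inj hb hb' h2
      rw [show p = (p.1, p.2) from rfl, e1, e2]
    · have e1 : p.1 = q.2 := v_inj ha hb' h1
      have e2 : p.2 = q.1 := v_inj hb ha' h2
      rw [show p = (p.1, p.2) from rfl, e1, e2, ecode_swap]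
  exact key p (mem_pairsOf hL hp) q (mem_pairsOf hL' hq) this


/-- The 7-cube contains four pairwise edge-disjoint symmetric chain decompositions. -/
theorem four_edge_disjoint_SCDs_Q7 :
    ∃ D : Fin 4 → Set (List (Fin 7 → Bool)),
      (∀ i, IsSCD 7 (D i)) ∧ ∀ i j, i ≠ j → EdgeDisjointSCD (D i) (D j) := by
  refine ⟨![DDof S0, DDof S1, DDof S2, DDof S3], ?_, ?_⟩
  · intro i
    fin_cases i
    · exact isSCD_of S0 chainsOK0 nodup0 bound0 cover0_s7
    · exact isSCD_of S1 chainsOK1 nodup1 bound1 cover1_s7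
    · exact isSCD_of S2 chainsOK2 nodup2 bound2 cover2_s7
    · exact isSCD_of S3 chainsOK3 nodup3 bound3 cover3
  · have h01 := edisj_of_key bound0 bound1 ed01
    have h02 := edisj_of_key bound0 bound2 ed02
    have h03 := edisj_of_key bound0 bound3 ed03
    have h12 := edisj_of_key bound1 bound2 ed12
    have h13 := edisj_of_key bound1 bound3 ed13
    have h23 := edisj_of_key bound2 bound3 ed23
    intro i j hij
    fin_cases i <;> fin_cases j <;>
      first
        | exact absurd rfl hij
        | exact h01 | exact h02 | exact h03 | exact h12 | exact h13 | exact h23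
        | exact h01.symm | exact h02.symm | exact h03.symm
        | exact h12.symm | exact h13.symm | exact h23.symm
end
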